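/- arXiv:2405.10096 — 6 statements merged into one kernel-verified Lean document; each statement's English description precedes it below -/
import Mathlib

section
/- (Post-processing bound at general order α: the quantized Gaussian mechanism is (α, α·C_q²/(2σ²))-RDP.) For every real α > 1 and all x, x' ∈ [−C_q/2, C_q/2], the Rényi divergence of order α between the quantized-Gaussian pmfs satisfies (1/(α−1))·log(∑_{r=0}^{k−1} P_x(r)^α · P_{x'}(r)^{1−α}) ≤ α·(x−x')²/(2σ²) ≤ α·C_q²/(2σ²). -/
open MeasureTheory Real

/-- Density of the normal distribution `N(x, σ²)`. -/
noncomputable def gpdf (σ x t : ℝ) : ℝ :=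
  (1 / (σ * Real.sqrt (2 * Real.pi))) * Real.exp (-(t - x) ^ 2 / (2 * σ ^ 2))

/-- Quantization levels `B(r) = -C_q + r · δ`, with `δ = 2·C_q/(k-1)`. -/
noncomputable def Blev (Cq : ℝ) (k : ℕ) (r : ℕ) : ℝ :=
  -Cq + (r : ℝ) * (2 * Cq / ((k : ℝ) - 1))

/-- The quantized-Gaussian pmf `P_x(r)` on `{0, 1, …, k-1}`. -/
noncomputable def qgPmf (Cq σ : ℝ) (k : ℕ) (x : ℝ) (r : ℕ) : ℝ :=
  if r = 0 then
    (∫ t in Set.Iic (Blev Cq k 0), gpdf σ x t)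
      + ∫ t in (Blev Cq k 0)..(Blev Cq k 1),
          gpdf σ x t * (Blev Cq k 1 - t) / (2 * Cq / ((k : ℝ) - 1))
  else if r = k - 1 then
    (∫ t in (Blev Cq k (k - 2))..(Blev Cq k (k - 1)),
        gpdf σ x t * (t - Blev Cq k (k - 2)) / (2 * Cq / ((k : ℝ) - 1)))
      + ∫ t in Set.Ici (Blev Cq k (k - 1)), gpdf σ x t
  else
    (∫ t in (Blev Cq k (r - 1))..(Blev Cq k r),
        gpdf σ x t * (t - Blev Cq k (r - 1)) / (2 * Cq / ((k : ℝ) - 1)))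
      + ∫ t in (Blev Cq k r)..(Blev Cq k (r + 1)),
          gpdf σ x t * (Blev Cq k (r + 1) - t) / (2 * Cq / ((k : ℝ) - 1))

/-! ### Auxiliary material -/

/-- Decreasing ramp functions whose consecutive differences are the tent weights. -/
noncomputable def rampU (Cq : ℝ) (k : ℕ) (j : ℕ) (t : ℝ) : ℝ :=
  if j = 0 then 1
  else if j ≤ k - 1 then min 1 (max 0 ((t - Blev Cq k (j - 1)) / (2 * Cq / ((k : ℝ) - 1))))
  else 0

/-- Tent weight functions. -/
noncomputable def Wt (Cq : ℝ) (k : ℕ) (r : ℕ) (t : ℝ) : ℝ :=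
  rampU Cq k r t - rampU Cq k (r + 1) t

lemma gpdf_pos {σ : ℝ} (hσ : 0 < σ) (x t : ℝ) : 0 < gpdf σ x t := by
  unfold gpdf
  have h2π : 0 < Real.sqrt (2 * Real.pi) := Real.sqrt_pos.2 (by positivity)
  positivity

lemma gpdf_continuous (σ x : ℝ) : Continuous (gpdf σ x) := by
  unfold gpdf; fun_prop

lemma gpdf_eq_gaussianPDFReal {σ : ℝ} (hσ : 0 < σ) (x : ℝ) :
    gpdf σ x = ProbabilityTheory.gaussianPDFReal x ⟨σ ^ 2, sq_nonneg σ⟩ := by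
  funext t
  unfold gpdf ProbabilityTheory.gaussianPDFReal
  show _ = (Real.sqrt (2 * Real.pi * σ ^ 2))⁻¹ * _
  have : Real.sqrt (2 * Real.pi * σ ^ 2) = σ * Real.sqrt (2 * Real.pi) := by
    rw [Real.sqrt_mul (by positivity), Real.sqrt_sq hσ.le, mul_comm]
  rw [this, one_div]
  norm_num
  exact Or.inl rfl

lemma gpdf_integrable {σ : ℝ} (hσ : 0 < σ) (x : ℝ) : Integrable (gpdf σ x) := by
  rw [gpdf_eq_gaussianPDFReal hσ]
  exact ProbabilityTheory.integrable_gaussianPDFReal x _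

lemma gpdf_integral_eq_one {σ : ℝ} (hσ : 0 < σ) (x : ℝ) : ∫ t, gpdf σ x t = 1 := by
  rw [gpdf_eq_gaussianPDFReal hσ]
  exact ProbabilityTheory.integral_gaussianPDFReal_eq_one x (by
    intro h
    have h2 : σ ^ 2 = 0 := congrArg Subtype.val h
    revert h2
    show ¬ (σ ^ 2 = 0)
    positivity)

/-- The pointwise Rényi identity for Gaussian densities. -/
lemma gpdf_rpow_mul {σ : ℝ} (hσ : 0 < σ) (α x x' t : ℝ) :
    gpdf σ x t ^ α * gpdf σ x' t ^ (1 - α)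
      = Real.exp ((α - 1) * (α * (x - x') ^ 2 / (2 * σ ^ 2)))
        * gpdf σ (α * x + (1 - α) * x') t := by
  have h2π : 0 < Real.sqrt (2 * Real.pi) := Real.sqrt_pos.2 (by positivity)
  set c : ℝ := 1 / (σ * Real.sqrt (2 * Real.pi)) with hc
  have hcpos : 0 < c := by positivity
  unfold gpdf
  rw [← hc]
  rw [Real.mul_rpow hcpos.le (Real.exp_pos _).le, Real.mul_rpow hcpos.le (Real.exp_pos _).le,
    ← Real.exp_mul, ← Real.exp_mul]
  have hcc : c ^ α * c ^ (1 - α) = c := by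
    rw [← Real.rpow_add hcpos]; norm_num
  have hσ2 : (σ : ℝ) ^ 2 ≠ 0 := by positivity
  have hexp : -(t - x) ^ 2 / (2 * σ ^ 2) * α + -(t - x') ^ 2 / (2 * σ ^ 2) * (1 - α)
      = (α - 1) * (α * (x - x') ^ 2 / (2 * σ ^ 2))
        + -(t - (α * x + (1 - α) * x')) ^ 2 / (2 * σ ^ 2) := by
    field_simp
    ring
  calc c ^ α * Real.exp (-(t - x) ^ 2 / (2 * σ ^ 2) * α)
        * (c ^ (1 - α) * Real.exp (-(t - x') ^ 2 / (2 * σ ^ 2) * (1 - α)))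
      = (c ^ α * c ^ (1 - α)) * Real.exp (-(t - x) ^ 2 / (2 * σ ^ 2) * α
          + -(t - x') ^ 2 / (2 * σ ^ 2) * (1 - α)) := by
        rw [Real.exp_add]; ring
    _ = Real.exp ((α - 1) * (α * (x - x') ^ 2 / (2 * σ ^ 2)))
          * (c * Real.exp (-(t - (α * x + (1 - α) * x')) ^ 2 / (2 * σ ^ 2))) := by
        rw [hcc, hexp, Real.exp_add]; ring

section Weights

variable {Cq σ : ℝ} {k : ℕ}

lemma delta_pos (hC : 0 < Cq) (hk : 2 ≤ k) : 0 < 2 * Cq / ((k : ℝ) - 1) := by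
  have : (2 : ℝ) ≤ (k : ℝ) := by exact_mod_cast hk
  have : (0 : ℝ) < (k : ℝ) - 1 := by linarith
  positivity

lemma Blev_succ (Cq : ℝ) (k : ℕ) (j : ℕ) :
    Blev Cq k (j + 1) = Blev Cq k j + 2 * Cq / ((k : ℝ) - 1) := by
  unfold Blev; push_cast; ring

lemma Blev_mono (hC : 0 < Cq) (hk : 2 ≤ k) {i j : ℕ} (h : i ≤ j) :
    Blev Cq k i ≤ Blev Cq k j := by
  unfold Blev
  have hd := (delta_pos (Cq := Cq) (k := k) hC hk)
  have hij : (i : ℝ) ≤ (j : ℝ) := by exact_mod_cast h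
  nlinarith

lemma rampU_nonneg (Cq : ℝ) (k j : ℕ) (t : ℝ) : 0 ≤ rampU Cq k j t := by
  unfold rampU
  split_ifs
  · norm_num
  · exact le_min zero_le_one (le_max_left 0 _)
  · exact le_refl 0

lemma rampU_le_one (Cq : ℝ) (k j : ℕ) (t : ℝ) : rampU Cq k j t ≤ 1 := by
  unfold rampU
  split_ifs
  · exact le_refl 1
  · exact min_le_left _ _
  · norm_num

lemma rampU_antitone_succ (hC : 0 < Cq) (hk : 2 ≤ k) (j : ℕ) (t : ℝ) :
    rampU Cq k (j + 1) t ≤ rampU Cq k j t := by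
  rcases eq_or_ne j 0 with h0 | h0
  · subst h0
    have h1 : rampU Cq k 0 t = 1 := by unfold rampU; simp
    rw [h1]; exact rampU_le_one Cq k 1 t
  · rcases le_or_gt (j + 1) (k - 1) with h2 | h2
    · have hj2 : j ≤ k - 1 := by omega
      have e1 : rampU Cq k (j + 1) t
          = min 1 (max 0 ((t - Blev Cq k j) / (2 * Cq / ((k : ℝ) - 1)))) := by
        unfold rampU
        rw [if_neg (by omega), if_pos h2, Nat.add_sub_cancel]
      have e2 : rampU Cq k j t
          = min 1 (max 0 ((t - Blev Cq k (j - 1)) / (2 * Cq / ((k : ℝ) - 1)))) := by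
        unfold rampU
        rw [if_neg h0, if_pos hj2]
      rw [e1, e2]
      have hB : Blev Cq k (j - 1) ≤ Blev Cq k j := Blev_mono hC hk (by omega)
      have hd := delta_pos (Cq := Cq) (k := k) hC hk
      have key : (t - Blev Cq k j) / (2 * Cq / ((k : ℝ) - 1))
          ≤ (t - Blev Cq k (j - 1)) / (2 * Cq / ((k : ℝ) - 1)) :=
        (div_le_div_iff_of_pos_right hd).2 (by linarith)
      exact min_le_min (le_refl 1) (max_le_max (le_refl 0) key)
    · have e1 : rampU Cq k (j + 1) t = 0 := by
        unfold rampU; rw [if_neg (by omega), if_neg (by omega)]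
      rw [e1]; exact rampU_nonneg Cq k j t

lemma Wt_nonneg (hC : 0 < Cq) (hk : 2 ≤ k) (r : ℕ) (t : ℝ) : 0 ≤ Wt Cq k r t :=
  sub_nonneg.2 (rampU_antitone_succ hC hk r t)

lemma Wt_le_one (hC : 0 < Cq) (hk : 2 ≤ k) (r : ℕ) (t : ℝ) : Wt Cq k r t ≤ 1 := by
  have h1 := rampU_le_one Cq k r t
  have h2 := rampU_nonneg Cq k (r + 1) t
  unfold Wt; linarith

lemma Wt_sum (hk : 2 ≤ k) (t : ℝ) : ∑ r ∈ Finset.range k, Wt Cq k r t = 1 := by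
  unfold Wt
  rw [Finset.sum_range_sub' (fun j => rampU Cq k j t)]
  have h0 : rampU Cq k 0 t = 1 := by unfold rampU; simp
  have hkk : rampU Cq k k t = 0 := by
    unfold rampU
    rw [if_neg (by omega), if_neg (by omega)]
  rw [h0, hkk, sub_zero]

lemma rampU_continuous (Cq : ℝ) (k j : ℕ) : Continuous (rampU Cq k j) := by
  unfold rampU
  rcases eq_or_ne j 0 with h | h
  · simp only [h, if_pos]; exact continuous_const
  · simp only [if_neg h]
    rcases le_or_gt j (k - 1) with h2 | h2
    · simp only [if_pos h2]
      exact continuous_const.min (continuous_const.max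
        ((continuous_id.sub continuous_const).div_const _))
    · simp only [if_neg (not_le.2 h2)]; exact continuous_const

lemma Wt_continuous (Cq : ℝ) (k r : ℕ) : Continuous (Wt Cq k r) :=
  (rampU_continuous Cq k r).sub (rampU_continuous Cq k (r + 1))

lemma Wt_mul_integrable (hC : 0 < Cq) (hσ : 0 < σ) (hk : 2 ≤ k) (r : ℕ) (y : ℝ) :
    Integrable (fun t => Wt Cq k r t * gpdf σ y t) := by
  refine (gpdf_integrable hσ y).mono
    ((Wt_continuous Cq k r).mul (gpdf_continuous σ y)).aestronglyMeasurable ?_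
  filter_upwards with t
  rw [norm_mul, Real.norm_eq_abs, Real.norm_eq_abs,
    abs_of_nonneg (Wt_nonneg hC hk r t)]
  nth_rewrite 2 [← one_mul |gpdf σ y t|]
  exact mul_le_mul_of_nonneg_right (Wt_le_one hC hk r t) (abs_nonneg _)

end Weights

/-- Representation of the pmf as an integral against a tent weight. -/
lemma qgPmf_eq_integral {Cq σ : ℝ} (hC : 0 < Cq) (hσ : 0 < σ) {k : ℕ} (hk : 2 ≤ k)
    (x : ℝ) {r : ℕ} (hr : r < k) :
    qgPmf Cq σ k x r = ∫ t, Wt Cq k r t * gpdf σ x t := by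
  have hδ : 0 < 2 * Cq / ((k : ℝ) - 1) := delta_pos hC hk
  have hkne : ((k : ℝ) - 1) ≠ 0 := by
    have : (2 : ℝ) ≤ (k : ℝ) := by exact_mod_cast hk
    linarith
  have hgc : Continuous (gpdf σ x) := gpdf_continuous σ x
  have hgi : Integrable (gpdf σ x) := gpdf_integrable hσ x
  rcases eq_or_ne r 0 with h0 | h0
  · subst h0
    have hB1 : Blev Cq k 1 = Blev Cq k 0 + 2 * Cq / ((k : ℝ) - 1) := Blev_succ Cq k 0
    have hWt : ∀ t, Wt Cq k 0 t * gpdf σ x t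
        = (Set.Iic (Blev Cq k 0)).indicator (gpdf σ x) t
          + (Set.Ioc (Blev Cq k 0) (Blev Cq k 1)).indicator
              (fun t => gpdf σ x t * (Blev Cq k 1 - t) / (2 * Cq / ((k : ℝ) - 1))) t := by
      intro t
      have hU0 : rampU Cq k 0 t = 1 := by unfold rampU; simp
      have hU1 : rampU Cq k 1 t
          = min 1 (max 0 ((t - Blev Cq k 0) / (2 * Cq / ((k : ℝ) - 1)))) := by
        unfold rampU; rw [if_neg one_ne_zero, if_pos (by omega)]
      unfold Wt
      rw [hU0, hU1]
      rcases le_or_gt t (Blev Cq k 0) with ht0 | ht0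
      · rw [Set.indicator_of_mem (Set.mem_Iic.2 ht0), Set.indicator_of_notMem (by
          simp only [Set.mem_Ioc, not_and_or, not_lt]; exact Or.inl ht0)]
        rw [max_eq_left (div_nonpos_of_nonpos_of_nonneg (by linarith) hδ.le),
          min_eq_right zero_le_one]
        ring
      · rcases le_or_gt t (Blev Cq k 1) with ht1 | ht1
        · rw [Set.indicator_of_notMem (by simp only [Set.mem_Iic]; exact not_le.2 ht0),
            Set.indicator_of_mem (Set.mem_Ioc.2 ⟨ht0, ht1⟩)]
          rw [max_eq_right (div_nonneg (by linarith) hδ.le),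
            min_eq_right ((div_le_one hδ).2 (by linarith))]
          rw [hB1]
          field_simp [hkne, hC.ne']
          ring
        · rw [Set.indicator_of_notMem (by simp only [Set.mem_Iic]; exact not_le.2 ht0),
            Set.indicator_of_notMem (by
              simp only [Set.mem_Ioc, not_and_or, not_le]; exact Or.inr ht1)]
          rw [min_eq_left (le_max_of_le_right ((one_le_div hδ).2 (by linarith)))]
          ring
    have hi1 : Integrable ((Set.Iic (Blev Cq k 0)).indicator (gpdf σ x)) :=
      hgi.integrableOn.integrable_indicator measurableSet_Iic
    have hi2 : Integrable ((Set.Ioc (Blev Cq k 0) (Blev Cq k 1)).indicator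
        (fun t => gpdf σ x t * (Blev Cq k 1 - t) / (2 * Cq / ((k : ℝ) - 1)))) := by
      refine IntegrableOn.integrable_indicator ?_ measurableSet_Ioc
      have hc : Continuous fun t => gpdf σ x t * (Blev Cq k 1 - t) / (2 * Cq / ((k : ℝ) - 1)) := by
        fun_prop
      exact hc.integrableOn_Icc.mono_set Set.Ioc_subset_Icc_self
    calc qgPmf Cq σ k x 0 = (∫ t in Set.Iic (Blev Cq k 0), gpdf σ x t)
        + ∫ t in (Blev Cq k 0)..(Blev Cq k 1),
            gpdf σ x t * (Blev Cq k 1 - t) / (2 * Cq / ((k : ℝ) - 1)) := by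
          unfold qgPmf; rw [if_pos rfl]
      _ = (∫ t, (Set.Iic (Blev Cq k 0)).indicator (gpdf σ x) t)
          + ∫ t, (Set.Ioc (Blev Cq k 0) (Blev Cq k 1)).indicator
              (fun t => gpdf σ x t * (Blev Cq k 1 - t) / (2 * Cq / ((k : ℝ) - 1))) t := by
          rw [integral_indicator measurableSet_Iic, integral_indicator measurableSet_Ioc,
            intervalIntegral.integral_of_le (Blev_mono hC hk zero_le_one)]
      _ = ∫ t, Wt Cq k 0 t * gpdf σ x t := by
          rw [← integral_add hi1 hi2]
          exact integral_congr_ae (Filter.Eventually.of_forall fun t => (hWt t).symm)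
  · rcases eq_or_ne r (k - 1) with hkr | hkr
    · subst hkr
      have hB : Blev Cq k (k - 1) = Blev Cq k (k - 2) + 2 * Cq / ((k : ℝ) - 1) := by
        have := Blev_succ Cq k (k - 2)
        rwa [show k - 2 + 1 = k - 1 by omega] at this
      have hWt : ∀ t, Wt Cq k (k - 1) t * gpdf σ x t
          = (Set.Ioc (Blev Cq k (k - 2)) (Blev Cq k (k - 1))).indicator
              (fun t => gpdf σ x t * (t - Blev Cq k (k - 2)) / (2 * Cq / ((k : ℝ) - 1))) t
            + (Set.Ioi (Blev Cq k (k - 1))).indicator (gpdf σ x) t := by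
        intro t
        have hU1 : rampU Cq k (k - 1) t
            = min 1 (max 0 ((t - Blev Cq k (k - 2)) / (2 * Cq / ((k : ℝ) - 1)))) := by
          unfold rampU
          rw [if_neg (by omega), if_pos (le_refl _), show k - 1 - 1 = k - 2 by omega]
        have hU2 : rampU Cq k (k - 1 + 1) t = 0 := by
          unfold rampU; rw [if_neg (by omega), if_neg (by omega)]
        unfold Wt
        rw [hU1, hU2, sub_zero]
        rcases le_or_gt t (Blev Cq k (k - 2)) with ht0 | ht0
        · rw [Set.indicator_of_notMem (by
              simp only [Set.mem_Ioc, not_and_or, not_lt]; exact Or.inl ht0),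
            Set.indicator_of_notMem (by
              simp only [Set.mem_Ioi, not_lt]
              exact ht0.trans (Blev_mono hC hk (by omega)))]
          rw [max_eq_left (div_nonpos_of_nonpos_of_nonneg (by linarith) hδ.le),
            min_eq_right zero_le_one]
          ring
        · rcases le_or_gt t (Blev Cq k (k - 1)) with ht1 | ht1
          · rw [Set.indicator_of_mem (Set.mem_Ioc.2 ⟨ht0, ht1⟩), Set.indicator_of_notMem (by
                simp only [Set.mem_Ioi, not_lt]; exact ht1)]
            rw [max_eq_right (div_nonneg (by linarith) hδ.le),
              min_eq_right ((div_le_one hδ).2 (by linarith))]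
            ring
          · rw [Set.indicator_of_notMem (by
                simp only [Set.mem_Ioc, not_and_or, not_le]; exact Or.inr ht1),
              Set.indicator_of_mem (Set.mem_Ioi.2 ht1)]
            rw [min_eq_left (le_max_of_le_right ((one_le_div hδ).2 (by linarith)))]
            ring
      have hi1 : Integrable ((Set.Ioc (Blev Cq k (k - 2)) (Blev Cq k (k - 1))).indicator
          (fun t => gpdf σ x t * (t - Blev Cq k (k - 2)) / (2 * Cq / ((k : ℝ) - 1)))) := by
        refine IntegrableOn.integrable_indicator ?_ measurableSet_Ioc
        have hc : Continuous fun t =>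
            gpdf σ x t * (t - Blev Cq k (k - 2)) / (2 * Cq / ((k : ℝ) - 1)) := by fun_prop
        exact hc.integrableOn_Icc.mono_set Set.Ioc_subset_Icc_self
      have hi2 : Integrable ((Set.Ioi (Blev Cq k (k - 1))).indicator (gpdf σ x)) :=
        hgi.integrableOn.integrable_indicator measurableSet_Ioi
      calc qgPmf Cq σ k x (k - 1)
          = (∫ t in (Blev Cq k (k - 2))..(Blev Cq k (k - 1)),
              gpdf σ x t * (t - Blev Cq k (k - 2)) / (2 * Cq / ((k : ℝ) - 1)))
            + ∫ t in Set.Ici (Blev Cq k (k - 1)), gpdf σ x t := by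
            unfold qgPmf; rw [if_neg (by omega), if_pos rfl]
        _ = (∫ t, (Set.Ioc (Blev Cq k (k - 2)) (Blev Cq k (k - 1))).indicator
              (fun t => gpdf σ x t * (t - Blev Cq k (k - 2)) / (2 * Cq / ((k : ℝ) - 1))) t)
            + ∫ t, (Set.Ioi (Blev Cq k (k - 1))).indicator (gpdf σ x) t := by
            rw [integral_indicator measurableSet_Ioc, integral_indicator measurableSet_Ioi,
              intervalIntegral.integral_of_le (Blev_mono hC hk (by omega)),
              MeasureTheory.integral_Ici_eq_integral_Ioi]
        _ = ∫ t, Wt Cq k (k - 1) t * gpdf σ x t := by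
            rw [← integral_add hi1 hi2]
            exact integral_congr_ae (Filter.Eventually.of_forall fun t => (hWt t).symm)
    · have hr1 : 1 ≤ r := by omega
      have hrk : r + 1 ≤ k - 1 := by omega
      have hBr : Blev Cq k r = Blev Cq k (r - 1) + 2 * Cq / ((k : ℝ) - 1) := by
        have := Blev_succ Cq k (r - 1)
        rwa [show r - 1 + 1 = r by omega] at this
      have hBr1 : Blev Cq k (r + 1) = Blev Cq k r + 2 * Cq / ((k : ℝ) - 1) := Blev_succ Cq k r
      have hWt : ∀ t, Wt Cq k r t * gpdf σ x t
          = (Set.Ioc (Blev Cq k (r - 1)) (Blev Cq k r)).indicator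
              (fun t => gpdf σ x t * (t - Blev Cq k (r - 1)) / (2 * Cq / ((k : ℝ) - 1))) t
            + (Set.Ioc (Blev Cq k r) (Blev Cq k (r + 1))).indicator
              (fun t => gpdf σ x t * (Blev Cq k (r + 1) - t) / (2 * Cq / ((k : ℝ) - 1))) t := by
        intro t
        have hU1 : rampU Cq k r t
            = min 1 (max 0 ((t - Blev Cq k (r - 1)) / (2 * Cq / ((k : ℝ) - 1)))) := by
          unfold rampU; rw [if_neg h0, if_pos (by omega)]
        have hU2 : rampU Cq k (r + 1) t
            = min 1 (max 0 ((t - Blev Cq k r) / (2 * Cq / ((k : ℝ) - 1)))) := by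
          unfold rampU; rw [if_neg (by omega), if_pos hrk, Nat.add_sub_cancel]
        unfold Wt
        rw [hU1, hU2]
        rcases le_or_gt t (Blev Cq k (r - 1)) with ht0 | ht0
        · rw [Set.indicator_of_notMem (by
              simp only [Set.mem_Ioc, not_and_or, not_lt]; exact Or.inl ht0),
            Set.indicator_of_notMem (by
              simp only [Set.mem_Ioc, not_and_or, not_lt]
              exact Or.inl (ht0.trans (by linarith)))]
          rw [max_eq_left (div_nonpos_of_nonpos_of_nonneg (by linarith) hδ.le),
            min_eq_right zero_le_one,
            max_eq_left (div_nonpos_of_nonpos_of_nonneg (by linarith) hδ.le),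
            min_eq_right zero_le_one]
          ring
        · rcases le_or_gt t (Blev Cq k r) with ht1 | ht1
          · rw [Set.indicator_of_mem (Set.mem_Ioc.2 ⟨ht0, ht1⟩), Set.indicator_of_notMem (by
                simp only [Set.mem_Ioc, not_and_or, not_lt]; exact Or.inl ht1)]
            rw [max_eq_right (div_nonneg (by linarith) hδ.le),
              min_eq_right ((div_le_one hδ).2 (by linarith)),
              max_eq_left (div_nonpos_of_nonpos_of_nonneg (by linarith) hδ.le),
              min_eq_right zero_le_one]
            ring
          · rcases le_or_gt t (Blev Cq k (r + 1)) with ht2 | ht2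
            · rw [Set.indicator_of_notMem (by
                  simp only [Set.mem_Ioc, not_and_or, not_le]; exact Or.inr ht1),
                Set.indicator_of_mem (Set.mem_Ioc.2 ⟨ht1, ht2⟩)]
              rw [min_eq_left (le_max_of_le_right ((one_le_div hδ).2 (by linarith))),
                max_eq_right (div_nonneg (by linarith) hδ.le),
                min_eq_right ((div_le_one hδ).2 (by linarith))]
              rw [hBr1]
              field_simp [hkne, hC.ne']
              ring
            · rw [Set.indicator_of_notMem (by
                  simp only [Set.mem_Ioc, not_and_or, not_le]; exact Or.inr ht1),
                Set.indicator_of_notMem (by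
                  simp only [Set.mem_Ioc, not_and_or, not_le]; exact Or.inr ht2)]
              rw [min_eq_left (le_max_of_le_right ((one_le_div hδ).2 (by linarith))),
                min_eq_left (le_max_of_le_right ((one_le_div hδ).2 (by linarith)))]
              ring
      have hi1 : Integrable ((Set.Ioc (Blev Cq k (r - 1)) (Blev Cq k r)).indicator
          (fun t => gpdf σ x t * (t - Blev Cq k (r - 1)) / (2 * Cq / ((k : ℝ) - 1)))) := by
        refine IntegrableOn.integrable_indicator ?_ measurableSet_Ioc
        have hc : Continuous fun t =>
            gpdf σ x t * (t - Blev Cq k (r - 1)) / (2 * Cq / ((k : ℝ) - 1)) := by fun_prop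
        exact hc.integrableOn_Icc.mono_set Set.Ioc_subset_Icc_self
      have hi2 : Integrable ((Set.Ioc (Blev Cq k r) (Blev Cq k (r + 1))).indicator
          (fun t => gpdf σ x t * (Blev Cq k (r + 1) - t) / (2 * Cq / ((k : ℝ) - 1)))) := by
        refine IntegrableOn.integrable_indicator ?_ measurableSet_Ioc
        have hc : Continuous fun t =>
            gpdf σ x t * (Blev Cq k (r + 1) - t) / (2 * Cq / ((k : ℝ) - 1)) := by fun_prop
        exact hc.integrableOn_Icc.mono_set Set.Ioc_subset_Icc_self
      calc qgPmf Cq σ k x r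
          = (∫ t in (Blev Cq k (r - 1))..(Blev Cq k r),
              gpdf σ x t * (t - Blev Cq k (r - 1)) / (2 * Cq / ((k : ℝ) - 1)))
            + ∫ t in (Blev Cq k r)..(Blev Cq k (r + 1)),
                gpdf σ x t * (Blev Cq k (r + 1) - t) / (2 * Cq / ((k : ℝ) - 1)) := by
            unfold qgPmf; rw [if_neg h0, if_neg hkr]
        _ = (∫ t, (Set.Ioc (Blev Cq k (r - 1)) (Blev Cq k r)).indicator
              (fun t => gpdf σ x t * (t - Blev Cq k (r - 1)) / (2 * Cq / ((k : ℝ) - 1))) t)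
            + ∫ t, (Set.Ioc (Blev Cq k r) (Blev Cq k (r + 1))).indicator
              (fun t => gpdf σ x t * (Blev Cq k (r + 1) - t) / (2 * Cq / ((k : ℝ) - 1))) t := by
            rw [integral_indicator measurableSet_Ioc, integral_indicator measurableSet_Ioc,
              intervalIntegral.integral_of_le (Blev_mono hC hk (by omega)),
              intervalIntegral.integral_of_le (Blev_mono hC hk (by omega))]
        _ = ∫ t, Wt Cq k r t * gpdf σ x t := by
            rw [← integral_add hi1 hi2]
            exact integral_congr_ae (Filter.Eventually.of_forall fun t => (hWt t).symm)

/-- Tangent-line inequality for `rpow`. -/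
lemma rpow_tangent {α θ s : ℝ} (hα : 1 < α) (hθ : 0 < θ) (hs : 0 ≤ s) :
    θ ^ α + α * θ ^ (α - 1) * (s - θ) ≤ s ^ α := by
  have hu : (-1 : ℝ) ≤ s / θ - 1 := by
    have : 0 ≤ s / θ := div_nonneg hs hθ.le
    linarith
  have hber := one_add_mul_self_le_rpow_one_add hu hα.le
  rw [show (1 : ℝ) + (s / θ - 1) = s / θ by ring] at hber
  have hθα : 0 < θ ^ α := Real.rpow_pos_of_pos hθ α
  have h2 : θ ^ α * (1 + α * (s / θ - 1)) ≤ θ ^ α * (s / θ) ^ α :=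
    mul_le_mul_of_nonneg_left hber hθα.le
  have h3 : θ ^ α * (s / θ) ^ α = s ^ α := by
    rw [Real.div_rpow hs hθ.le]
    field_simp
  have h4 : θ ^ (α - 1) = θ ^ α / θ := by
    rw [Real.rpow_sub hθ, Real.rpow_one]
  rw [h3] at h2
  calc θ ^ α + α * θ ^ (α - 1) * (s - θ) = θ ^ α * (1 + α * (s / θ - 1)) := by
        rw [h4]; field_simp
    _ ≤ s ^ α := h2

/-- Per-bucket Hölder-type inequality. -/
lemma holder_bucket {α : ℝ} (hα : 1 < α) {w p q : ℝ → ℝ}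
    (hp : ∀ t, 0 < p t) (hq : ∀ t, 0 < q t) (hw : ∀ t, 0 ≤ w t)
    (hwp : Integrable (fun t => w t * p t)) (hwq : Integrable (fun t => w t * q t))
    (hwφ : Integrable (fun t => w t * (p t ^ α * q t ^ (1 - α)))) :
    (∫ t, w t * p t) ^ α * (∫ t, w t * q t) ^ (1 - α)
      ≤ ∫ t, w t * (p t ^ α * q t ^ (1 - α)) := by
  set A := ∫ t, w t * p t with hA
  set B := ∫ t, w t * q t with hB
  have hφnn : ∀ t, 0 ≤ w t * (p t ^ α * q t ^ (1 - α)) := fun t =>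
    mul_nonneg (hw t) (mul_nonneg (Real.rpow_nonneg (hp t).le _) (Real.rpow_nonneg (hq t).le _))
  have hRHS : 0 ≤ ∫ t, w t * (p t ^ α * q t ^ (1 - α)) := integral_nonneg hφnn
  have hAnn : 0 ≤ A := integral_nonneg fun t => mul_nonneg (hw t) (hp t).le
  have hBnn : 0 ≤ B := integral_nonneg fun t => mul_nonneg (hw t) (hq t).le
  rcases eq_or_lt_of_le hBnn with hB0 | hBpos
  · rw [← hB0, Real.zero_rpow (by linarith), mul_zero]; exact hRHS
  rcases eq_or_lt_of_le hAnn with hA0 | hApos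
  · rw [← hA0, Real.zero_rpow (by linarith), zero_mul]; exact hRHS
  set θ := A / B with hθdef
  have hθ : 0 < θ := div_pos hApos hBpos
  have hpt : ∀ t, α * θ ^ (α - 1) * (w t * p t) + (1 - α) * θ ^ α * (w t * q t)
      ≤ w t * (p t ^ α * q t ^ (1 - α)) := by
    intro t
    have hqi : (q t : ℝ) ≠ 0 := (hq t).ne'
    have hqα : (q t : ℝ) ^ α ≠ 0 := (Real.rpow_pos_of_pos (hq t) α).ne'
    have hrw : w t * (p t ^ α * q t ^ (1 - α)) = (w t * q t) * (p t / q t) ^ α := by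
      rw [Real.div_rpow (hp t).le (hq t).le,
        show q t ^ (1 - α) = q t / q t ^ α by rw [Real.rpow_sub (hq t), Real.rpow_one]]
      field_simp
    have htan := rpow_tangent hα hθ (div_nonneg (hp t).le (hq t).le)
    have hwq : 0 ≤ w t * q t := mul_nonneg (hw t) (hq t).le
    have h5 : (w t * q t) * (θ ^ α + α * θ ^ (α - 1) * (p t / q t - θ))
        ≤ (w t * q t) * (p t / q t) ^ α := mul_le_mul_of_nonneg_left htan hwq
    rw [hrw]
    refine le_trans (le_of_eq ?_) h5
    have hθθ : θ ^ (α - 1) * θ = θ ^ α := by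
      have := (Real.rpow_add hθ (α - 1) 1).symm
      rw [Real.rpow_one] at this
      rw [this]; norm_num
    have hpq : q t * (p t / q t) = p t := by field_simp
    linear_combination (α * θ ^ (α - 1) * w t) * hpq.symm + (α * w t * q t) * hθθ
  have hlin : Integrable
      (fun t => α * θ ^ (α - 1) * (w t * p t) + (1 - α) * θ ^ α * (w t * q t)) :=
    (hwp.const_mul _).add (hwq.const_mul _)
  have hint := integral_mono hlin hwφ hpt
  rw [integral_add (hwp.const_mul _) (hwq.const_mul _), integral_const_mul,
    integral_const_mul, ← hA, ←
    hB] at hint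
  have hAα : A ^ (α - 1) * A = A ^ α := by
    nth_rewrite 2 [← Real.rpow_one A]
    rw [← Real.rpow_add hApos]; norm_num
  have h1 : θ ^ (α - 1) * A = A ^ α * B ^ (1 - α) := by
    rw [hθdef, Real.div_rpow hAnn hBnn, div_mul_eq_mul_div, hAα,
      show (1 - α : ℝ) = -(α - 1) by ring, Real.rpow_neg hBnn, div_eq_mul_inv]
  have h2 : θ ^ α * B = A ^ α * B ^ (1 - α) := by
    rw [hθdef, Real.div_rpow hAnn hBnn, div_mul_eq_mul_div, mul_div_assoc,
      show B / B ^ α = B ^ (1 - α) from (by rw [Real.rpow_sub hBpos, Real.rpow_one])]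
  have hint' : α * (θ ^ (α - 1) * A) + (1 - α) * (θ ^ α * B)
      ≤ ∫ t, w t * (p t ^ α * q t ^ (1 - α)) := by
    rw [← mul_assoc, ← mul_assoc]; exact hint
  calc A ^ α * B ^ (1 - α)
      = α * (θ ^ (α - 1) * A) + (1 - α) * (θ ^ α * B) := by rw [h1, h2]; ring
    _ ≤ _ := hint'

/-- Post-processing bound at general order `α > 1`: the quantized Gaussian mechanism is
`(α, α·C_q²/(2σ²))`-RDP. -/
theorem quantGauss_renyi_le_gaussian_budget (Cq σ : ℝ) (hC : 0 < Cq) (hσ : 0 < σ)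
    (k : ℕ) (hk : 2 ≤ k) (α : ℝ) (hα : 1 < α) (x x' : ℝ)
    (hx : x ∈ Set.Icc (-(Cq / 2)) (Cq / 2)) (hx' : x' ∈ Set.Icc (-(Cq / 2)) (Cq / 2)) :
    (1 / (α - 1)) * Real.log (∑ r ∈ Finset.range k,
        qgPmf Cq σ k x r ^ α * qgPmf Cq σ k x' r ^ (1 - α))
      ≤ α * (x - x') ^ 2 / (2 * σ ^ 2)
    ∧ α * (x - x') ^ 2 / (2 * σ ^ 2) ≤ α * Cq ^ 2 / (2 * σ ^ 2) := by
  have hα1 : 0 < α - 1 := by linarith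
  have hσ2 : 0 < 2 * σ ^ 2 := by positivity
  have hD : 0 ≤ α * (x - x') ^ 2 / (2 * σ ^ 2) :=
    div_nonneg (mul_nonneg (by linarith) (sq_nonneg _)) hσ2.le
  constructor
  · -- the Rényi divergence bound
    have hwφ_int : ∀ r : ℕ, Integrable
        (fun t => Wt Cq k r t * (gpdf σ x t ^ α * gpdf σ x' t ^ (1 - α))) := by
      intro r
      have heq : (fun t => Wt Cq k r t * (gpdf σ x t ^ α * gpdf σ x' t ^ (1 - α)))
          = fun t => Real.exp ((α - 1) * (α * (x - x') ^ 2 / (2 * σ ^ 2)))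
              * (Wt Cq k r t * gpdf σ (α * x + (1 - α) * x') t) := by
        funext t; rw [gpdf_rpow_mul hσ α x x' t]; ring
      rw [heq]
      exact (Wt_mul_integrable hC hσ hk r (α * x + (1 - α) * x')).const_mul _
    have hS : ∑ r ∈ Finset.range k, qgPmf Cq σ k x r ^ α * qgPmf Cq σ k x' r ^ (1 - α)
        ≤ Real.exp ((α - 1) * (α * (x - x') ^ 2 / (2 * σ ^ 2))) := by
      calc ∑ r ∈ Finset.range k, qgPmf Cq σ k x r ^ α * qgPmf Cq σ k x' r ^ (1 - α)
          ≤ ∑ r ∈ Finset.range k,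
              ∫ t, Wt Cq k r t * (gpdf σ x t ^ α * gpdf σ x' t ^ (1 - α)) := by
            refine Finset.sum_le_sum fun r hr => ?_
            rw [qgPmf_eq_integral hC hσ hk x (Finset.mem_range.1 hr),
              qgPmf_eq_integral hC hσ hk x' (Finset.mem_range.1 hr)]
            exact holder_bucket hα (gpdf_pos hσ x) (gpdf_pos hσ x') (Wt_nonneg hC hk r)
              (Wt_mul_integrable hC hσ hk r x) (Wt_mul_integrable hC hσ hk r x') (hwφ_int r)
        _ = ∫ t, ∑ r ∈ Finset.range k,
              Wt Cq k r t * (gpdf σ x t ^ α * gpdf σ x' t ^ (1 - α)) :=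
            (integral_finset_sum _ fun r _ => hwφ_int r).symm
        _ = ∫ t, gpdf σ x t ^ α * gpdf σ x' t ^ (1 - α) := by
            congr 1; funext t
            rw [← Finset.sum_mul, Wt_sum hk t, one_mul]
        _ = ∫ t, Real.exp ((α - 1) * (α * (x - x') ^ 2 / (2 * σ ^ 2)))
              * gpdf σ (α * x + (1 - α) * x') t := by
            congr 1; funext t; rw [gpdf_rpow_mul hσ α x x' t]
        _ = Real.exp ((α - 1) * (α * (x - x') ^ 2 / (2 * σ ^ 2))) := by
            rw [integral_const_mul, gpdf_integral_eq_one hσ, mul_one]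
    have hSnn : 0 ≤ ∑ r ∈ Finset.range k,
        qgPmf Cq σ k x r ^ α * qgPmf Cq σ k x' r ^ (1 - α) := by
      refine Finset.sum_nonneg fun r hr => ?_
      rw [qgPmf_eq_integral hC hσ hk x (Finset.mem_range.1 hr),
        qgPmf_eq_integral hC hσ hk x' (Finset.mem_range.1 hr)]
      exact mul_nonneg
        (Real.rpow_nonneg (integral_nonneg fun t =>
          mul_nonneg (Wt_nonneg hC hk r t) (gpdf_pos hσ x t).le) _)
        (Real.rpow_nonneg (integral_nonneg fun t =>
          mul_nonneg (Wt_nonneg hC hk r t) (gpdf_pos hσ x' t).le) _)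
    rcases eq_or_lt_of_le hSnn with h0 | hpos
    · rw [← h0, Real.log_zero, mul_zero]; exact hD
    · have hlog : Real.log (∑ r ∈ Finset.range k,
          qgPmf Cq σ k x r ^ α * qgPmf Cq σ k x' r ^ (1 - α))
          ≤ (α - 1) * (α * (x - x') ^ 2 / (2 * σ ^ 2)) := by
        calc Real.log (∑ r ∈ Finset.range k,
              qgPmf Cq σ k x r ^ α * qgPmf Cq σ k x' r ^ (1 - α))
            ≤ Real.log (Real.exp ((α - 1) * (α * (x - x') ^ 2 / (2 * σ ^ 2)))) :=
              Real.log_le_log hpos hS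
          _ = (α - 1) * (α * (x - x') ^ 2 / (2 * σ ^ 2)) := Real.log_exp _
      calc (1 / (α - 1)) * Real.log (∑ r ∈ Finset.range k,
            qgPmf Cq σ k x r ^ α * qgPmf Cq σ k x' r ^ (1 - α))
          ≤ (1 / (α - 1)) * ((α - 1) * (α * (x - x') ^ 2 / (2 * σ ^ 2))) :=
            mul_le_mul_of_nonneg_left hlog (by positivity)
        _ = α * (x - x') ^ 2 / (2 * σ ^ 2) := by
            field_simp
  · -- trivial bound
    obtain ⟨hx1, hx2⟩ := hx
    obtain ⟨hx'1, hx'2⟩ := hx'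
    have hxx : (x - x') ^ 2 ≤ Cq ^ 2 := sq_le_sq' (by linarith) (by linarith)
    exact (div_le_div_iff_of_pos_right hσ2).2 (mul_le_mul_of_nonneg_left hxx (by linarith))
end

section
/- (Lemma 4, core monotonicity.) Define g : (0, 2·C_q] → ℝ by g(δ) = (1/δ)·∫_{C_q−δ}^{C_q} f_{−C_q/2}(t)·(t−(C_q−δ)) dt, where f_{−C_q/2} is the density of N(−C_q/2, σ²). Then g is strictly monotone increasing on (0, 2·C_q]: for all 0 < δ₁ < δ₂ ≤ 2·C_q, g(δ₁) < g(δ₂). -/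
open MeasureTheory Real

/-- Lemma 4, core monotonicity: the normalized end-cell mass
`g(δ) = (1/δ)·∫_{C_q-δ}^{C_q} f_{-C_q/2}(t)·(t - (C_q - δ)) dt` is strictly monotone
increasing on `(0, 2·C_q]`. -/
theorem endcell_mass_strictMono (Cq σ : ℝ) (hC : 0 < Cq) (hσ : 0 < σ)
    (δ₁ δ₂ : ℝ) (h1 : 0 < δ₁) (h12 : δ₁ < δ₂) (h2 : δ₂ ≤ 2 * Cq) :
    (1 / δ₁) * ∫ t in (Cq - δ₁)..Cq, gpdf σ (-(Cq / 2)) t * (t - (Cq - δ₁))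
      < (1 / δ₂) * ∫ t in (Cq - δ₂)..Cq, gpdf σ (-(Cq / 2)) t * (t - (Cq - δ₂)) := by
  have h01 : (0:ℝ) < δ₂ := h1.trans h12
  set f : ℝ → ℝ := fun t => gpdf σ (-(Cq / 2)) t with hfdef
  have hfc : Continuous f := by
    simp only [hfdef, gpdf]
    continuity
  have hfpos : ∀ t, 0 < f t := by
    intro t
    simp only [hfdef, gpdf]
    have h2pi : (0:ℝ) < Real.sqrt (2 * Real.pi) := Real.sqrt_pos.mpr (by positivity)
    positivity
  -- integrability helpers
  have hint1 : ∀ a b c : ℝ, IntervalIntegrable (fun t => f t * (t - c)) volume a b :=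
    fun a b c => (hfc.mul (by continuity)).intervalIntegrable a b
  have hintf : ∀ a b : ℝ, IntervalIntegrable f volume a b :=
    fun a b => hfc.intervalIntegrable a b
  set I₁ := ∫ t in (Cq - δ₁)..Cq, f t * (t - (Cq - δ₁)) with hI1
  set I₂ := ∫ t in (Cq - δ₂)..Cq, f t * (t - (Cq - δ₂)) with hI2
  set H₁ := ∫ t in (Cq - δ₁)..Cq, f t with hH1
  set P := ∫ t in (Cq - δ₂)..(Cq - δ₁), f t * (t - (Cq - δ₂)) with hP
  -- split I₂
  have hsplit : I₂ = P + ∫ t in (Cq - δ₁)..Cq, f t * (t - (Cq - δ₂)) :=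
    (intervalIntegral.integral_add_adjacent_intervals (hint1 _ _ _) (hint1 _ _ _)).symm
  -- rewrite the right piece
  have hQ : (∫ t in (Cq - δ₁)..Cq, f t * (t - (Cq - δ₂))) = I₁ + (δ₂ - δ₁) * H₁ := by
    have heq : ∀ t : ℝ, f t * (t - (Cq - δ₂))
        = f t * (t - (Cq - δ₁)) + (δ₂ - δ₁) * f t := by intro t; ring
    simp_rw [heq]
    rw [intervalIntegral.integral_add (hint1 _ _ _)
      (show IntervalIntegrable (fun t => (δ₂ - δ₁) * f t) volume (Cq - δ₁) Cq from
        (continuous_const.mul hfc).intervalIntegrable _ _),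
      intervalIntegral.integral_const_mul]
  -- P ≥ 0
  have hPnn : 0 ≤ P := by
    apply intervalIntegral.integral_nonneg (by linarith)
    intro t ht
    have : Cq - δ₂ ≤ t := ht.1
    have := (hfpos t).le
    nlinarith
  -- I₁ < δ₁ * H₁
  have hkey : I₁ < δ₁ * H₁ := by
    have hpos : 0 < ∫ t in (Cq - δ₁)..Cq, (δ₁ * f t - f t * (t - (Cq - δ₁))) := by
      apply intervalIntegral.intervalIntegral_pos_of_pos_on
      · exact ((continuous_const.mul hfc).sub (hfc.mul (by continuity))).intervalIntegrable _ _
      · intro t ht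
        have h1' : t < Cq := ht.2
        have := hfpos t
        nlinarith
      · linarith
    rw [intervalIntegral.integral_sub (show IntervalIntegrable (fun t => δ₁ * f t) volume (Cq - δ₁) Cq from
        (continuous_const.mul hfc).intervalIntegrable _ _)
      (hint1 _ _ _), intervalIntegral.integral_const_mul] at hpos
    linarith
  -- conclude
  rw [one_div, one_div, ← div_eq_inv_mul, ← div_eq_inv_mul, div_lt_div_iff₀ h1 h01]
  have hI₂ : I₂ = P + (I₁ + (δ₂ - δ₁) * H₁) := by rw [hsplit, hQ]
  nlinarith [mul_pos h1 (sub_pos.mpr h12)]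
end

section
/- (Lemma 4, derivative positivity.) Define g : (0, 2·C_q) → ℝ by g(δ) = (1/δ)·∫_{C_q−δ}^{C_q} f_{−C_q/2}(t)·(t−(C_q−δ)) dt, where f_{−C_q/2} is the density of N(−C_q/2, σ²). Then for every δ ∈ (0, 2·C_q), g is differentiable at δ and its derivative is strictly positive: there exists d > 0 such that g has derivative d at δ. -/
open MeasureTheory Real

/-- FTC helper: derivative in `s` of `∫_{Cq-s}^{Cq} φ`. -/
lemma aux_lower_deriv (φ : ℝ → ℝ) (hφ : Continuous φ) (Cq δ : ℝ) :
    HasDerivAt (fun s => ∫ t in (Cq - s)..Cq, φ t) (φ (Cq - δ)) δ := by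
  have hΦ : HasDerivAt (fun u => ∫ t in Cq..u, φ t) (φ (Cq - δ)) (Cq - δ) :=
    intervalIntegral.integral_hasDerivAt_right (hφ.intervalIntegrable _ _)
      hφ.stronglyMeasurable.stronglyMeasurableAtFilter hφ.continuousAt
  have hsub : HasDerivAt (fun s : ℝ => Cq - s) (-1) δ := (hasDerivAt_id δ).const_sub Cq
  have h : HasDerivAt (fun s => -((fun u => ∫ t in Cq..u, φ t) ∘ (fun s : ℝ => Cq - s)) s)
      (-(φ (Cq - δ) * -1)) δ := (hΦ.comp δ hsub).neg
  have h2 : (fun s => ∫ t in (Cq - s)..Cq, φ t)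
      = fun s => -((fun u => ∫ t in Cq..u, φ t) ∘ (fun s : ℝ => Cq - s)) s := by
    funext s
    simp [Function.comp, intervalIntegral.integral_symm Cq (Cq - s)]
  rw [h2]
  convert h using 1
  ring

/-- Lemma 4, derivative positivity: on `(0, 2·C_q)`, the normalized end-cell mass
`g(δ) = (1/δ)·∫_{C_q-δ}^{C_q} f_{-C_q/2}(t)·(t - (C_q - δ)) dt` is differentiable with
strictly positive derivative. -/
theorem endcell_mass_deriv_pos (Cq σ : ℝ) (hC : 0 < Cq) (hσ : 0 < σ)
    (δ : ℝ) (hδ : δ ∈ Set.Ioo 0 (2 * Cq)) :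
    ∃ d : ℝ, 0 < d ∧
      HasDerivAt (fun s : ℝ =>
          (1 / s) * ∫ t in (Cq - s)..Cq, gpdf σ (-(Cq / 2)) t * (t - (Cq - s))) d δ := by
  obtain ⟨hδ0, hδ2⟩ := hδ
  have hδne : δ ≠ 0 := ne_of_gt hδ0
  set f : ℝ → ℝ := fun t => gpdf σ (-(Cq / 2)) t with hfdef
  have hfc : Continuous f := by
    simp only [hfdef, gpdf]
    fun_prop
  have hfpos : ∀ t, 0 < f t := by
    intro t
    have h1 : 0 < σ * Real.sqrt (2 * Real.pi) :=
      mul_pos hσ (Real.sqrt_pos.mpr (by positivity))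
    simp only [hfdef, gpdf]
    positivity
  have hft : Continuous (fun t => f t * t) := hfc.mul continuous_id
  -- derivatives of building blocks
  have hA : HasDerivAt (fun s => ∫ t in (Cq - s)..Cq, f t * t)
      (f (Cq - δ) * (Cq - δ)) δ := aux_lower_deriv _ hft Cq δ
  have hB : HasDerivAt (fun s => ∫ t in (Cq - s)..Cq, f t) (f (Cq - δ)) δ :=
    aux_lower_deriv _ hfc Cq δ
  set B : ℝ := ∫ t in (Cq - δ)..Cq, f t with hBdef
  set A : ℝ := ∫ t in (Cq - δ)..Cq, f t * t with hAdef
  have hKB : HasDerivAt (fun s => (Cq - s) * ∫ t in (Cq - s)..Cq, f t)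
      ((-1) * B + (Cq - δ) * f (Cq - δ)) δ :=
    ((hasDerivAt_id δ).const_sub Cq).mul hB
  have hK : HasDerivAt
      (fun s => (∫ t in (Cq - s)..Cq, f t * t) - (Cq - s) * ∫ t in (Cq - s)..Cq, f t)
      (f (Cq - δ) * (Cq - δ) - ((-1) * B + (Cq - δ) * f (Cq - δ))) δ := hA.sub hKB
  have hinv : HasDerivAt (fun s : ℝ => 1 / s) (-(δ ^ 2)⁻¹) δ := by
    simpa [one_div] using hasDerivAt_inv hδne
  have hg := hinv.mul hK
  -- rewrite the target function
  have hfun : (fun s : ℝ =>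
      (1 / s) * ∫ t in (Cq - s)..Cq, gpdf σ (-(Cq / 2)) t * (t - (Cq - s)))
      = fun s => (1 / s) *
          ((∫ t in (Cq - s)..Cq, f t * t) - (Cq - s) * ∫ t in (Cq - s)..Cq, f t) := by
    funext s
    congr 1
    have h1 : ∀ t, f t * (t - (Cq - s)) = f t * t - (Cq - s) * f t := fun t => by ring
    simp_rw [← hfdef, h1]
    rw [intervalIntegral.integral_sub (hft.intervalIntegrable _ _)
      ((show Continuous fun t => (Cq - s) * f t from continuous_const.mul hfc).intervalIntegrable _ _),
      intervalIntegral.integral_const_mul]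
  -- strict positivity of ∫ f (Cq - t)
  set P : ℝ := ∫ t in (Cq - δ)..Cq, f t * (Cq - t) with hPdef
  have hPpos : 0 < P := by
    apply intervalIntegral.intervalIntegral_pos_of_pos_on
      ((hfc.mul (continuous_const.sub continuous_id)).intervalIntegrable _ _)
    · intro x hx
      exact mul_pos (hfpos x) (by simp only [Pi.sub_apply, id_eq]; linarith [hx.2])
    · linarith
  have hPeq : P = δ * B - (A - (Cq - δ) * B) := by
    have h1 : ∀ t, f t * (Cq - t) = Cq * f t - f t * t := fun t => by ring
    rw [hPdef]
    simp_rw [h1]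
    rw [intervalIntegral.integral_sub ((show Continuous fun t => Cq * f t from continuous_const.mul hfc).intervalIntegrable _ _)
      (hft.intervalIntegrable _ _), intervalIntegral.integral_const_mul]
    rw [hBdef, hAdef]
    ring
  refine ⟨-(δ ^ 2)⁻¹ * (A - (Cq - δ) * B) + (1 / δ) *
    (f (Cq - δ) * (Cq - δ) - ((-1) * B + (Cq - δ) * f (Cq - δ))), ?_, ?_⟩
  · have heq : -(δ ^ 2)⁻¹ * (A - (Cq - δ) * B) + (1 / δ) *
        (f (Cq - δ) * (Cq - δ) - ((-1) * B + (Cq - δ) * f (Cq - δ)))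
        = P / δ ^ 2 := by
      rw [hPeq]
      field_simp
      ring
    rw [heq]
    positivity
  · rw [hfun]
    exact hg
end

section
/- (Lemma 1, endpoint cases: D_1 ≤ D_α ≤ D_∞ for finite pmfs.) Let P, Q : Fin n → ℝ be probability mass functions on a finite set (nonnegative, each summing to 1) with P(i) > 0 and Q(i) > 0 for all i. Then for every real α > 1: ∑_i P(i)·log(P(i)/Q(i)) ≤ (1/(α−1))·log(∑_i P(i)^α·Q(i)^{1−α}) ≤ max_i log(P(i)/Q(i)). -/
open Real

/-- Lemma 1, endpoint cases `D_1 ≤ D_α ≤ D_∞` for finite pmfs: for pmfs `P, Q` on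
`Fin n` with `P` and `Q` strictly positive and any real `α > 1`, the KL divergence is
at most the order-`α` Rényi divergence, which is at most the order-`∞` Rényi
divergence `max_i log(P i / Q i)`. -/
theorem kl_le_renyi_le_max (n : ℕ) (hn : 0 < n) (P Q : Fin n → ℝ)
    (hP0 : ∀ i, 0 < P i) (hQ0 : ∀ i, 0 < Q i)
    (hP1 : ∑ i, P i = 1) (hQ1 : ∑ i, Q i = 1)
    (α : ℝ) (hα : 1 < α) :
    ∑ i, P i * Real.log (P i / Q i)
        ≤ (1 / (α - 1)) * Real.log (∑ i, P i ^ α * Q i ^ (1 - α))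
    ∧ (1 / (α - 1)) * Real.log (∑ i, P i ^ α * Q i ^ (1 - α))
        ≤ Finset.univ.sup'
            (Finset.univ_nonempty_iff.mpr ⟨⟨0, hn⟩⟩)
            (fun i => Real.log (P i / Q i)) := by
  have hα0 : (0:ℝ) < α - 1 := by linarith
  have hr : ∀ i, 0 < P i / Q i := fun i => div_pos (hP0 i) (hQ0 i)
  have key : ∀ i, P i ^ α * Q i ^ (1 - α) = P i * ((P i / Q i) ^ (α - 1)) := by
    intro i
    have h1 : P i ^ α = P i ^ (1:ℝ) * P i ^ (α - 1) := by
      rw [← Real.rpow_add (hP0 i)]; congr 1; ring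
    have h2 : Q i ^ ((1:ℝ) - α) = (Q i ^ (α - 1))⁻¹ := by
      rw [← Real.rpow_neg (hQ0 i).le]; congr 1; ring
    rw [h1, h2, Real.rpow_one, Real.div_rpow (hP0 i).le (hQ0 i).le, div_eq_mul_inv]
    ring
  set S : ℝ := ∑ i, P i ^ α * Q i ^ (1 - α) with hS
  have hSeq : S = ∑ i, P i * ((P i / Q i) ^ (α - 1)) := by
    rw [hS]; exact Finset.sum_congr rfl fun i _ => key i
  have hSpos : 0 < S := by
    rw [hSeq]
    apply Finset.sum_pos
    · exact fun i _ => mul_pos (hP0 i) (Real.rpow_pos_of_pos (hr i) _)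
    · exact Finset.univ_nonempty_iff.mpr ⟨⟨0, hn⟩⟩
  constructor
  · -- KL ≤ Rényi via Jensen (concavity of log)
    have jensen := strictConcaveOn_log_Ioi.concaveOn.le_map_sum
      (t := Finset.univ) (w := P) (p := fun i => (P i / Q i) ^ (α - 1))
      (fun i _ => (hP0 i).le) hP1
      (fun i _ => Set.mem_Ioi.mpr (Real.rpow_pos_of_pos (hr i) _))
    simp only [smul_eq_mul] at jensen
    have hlog : ∀ i, P i * Real.log ((P i / Q i) ^ (α - 1))
        = (α - 1) * (P i * Real.log (P i / Q i)) := by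
      intro i; rw [Real.log_rpow (hr i)]; ring
    rw [Finset.sum_congr rfl (fun i _ => hlog i), ← Finset.mul_sum, ← hSeq] at jensen
    calc ∑ i, P i * Real.log (P i / Q i) ≤ Real.log S / (α - 1) :=
          (le_div_iff₀' hα0).mpr jensen
      _ = (1 / (α - 1)) * Real.log S := by ring
  · -- Rényi ≤ max
    set M : ℝ := Finset.univ.sup'
        (Finset.univ_nonempty_iff.mpr ⟨⟨0, hn⟩⟩) (fun i => Real.log (P i / Q i)) with hM
    have hle : ∀ i, (P i / Q i) ^ (α - 1) ≤ Real.exp ((α - 1) * M) := by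
      intro i
      have h1 : Real.log (P i / Q i) ≤ M :=
        Finset.le_sup' (fun i => Real.log (P i / Q i)) (Finset.mem_univ i)
      calc (P i / Q i) ^ (α - 1) = Real.exp ((α - 1) * Real.log (P i / Q i)) := by
            rw [← Real.log_rpow (hr i), Real.exp_log (Real.rpow_pos_of_pos (hr i) _)]
        _ ≤ Real.exp ((α - 1) * M) := by
            apply Real.exp_le_exp.mpr
            exact mul_le_mul_of_nonneg_left h1 hα0.le
    have hSle : S ≤ Real.exp ((α - 1) * M) := by
      rw [hSeq]
      calc ∑ i, P i * ((P i / Q i) ^ (α - 1))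
          ≤ ∑ i, P i * Real.exp ((α - 1) * M) :=
            Finset.sum_le_sum fun i _ =>
              mul_le_mul_of_nonneg_left (hle i) (hP0 i).le
        _ = Real.exp ((α - 1) * M) := by rw [← Finset.sum_mul, hP1, one_mul]
    have hlogS : Real.log S ≤ (α - 1) * M := by
      calc Real.log S ≤ Real.log (Real.exp ((α - 1) * M)) :=
            Real.log_le_log hSpos hSle
        _ = (α - 1) * M := Real.log_exp _
    calc (1 / (α - 1)) * Real.log S ≤ (1 / (α - 1)) * ((α - 1) * M) := by
          apply mul_le_mul_of_nonneg_left hlogS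
          positivity
      _ = M := by field_simp
end

section
/- (Rényi divergence between equal-variance Gaussians, used for the Gaussian mechanism budget.) For all reals μ, ν, every σ > 0, and every real α > 1, letting f_μ and f_ν be the densities of N(μ, σ²) and N(ν, σ²) respectively, (1/(α−1))·log( ∫_ℝ f_μ(t)^α · f_ν(t)^{1−α} dt ) = α·(μ−ν)²/(2σ²). In particular, the Gaussian mechanism with ℓ2-sensitivity Δ and noise variance σ² satisfies (α, α·Δ²/(2σ²))-RDP. -/
open MeasureTheory Real

lemma gpdf_integral (σ m : ℝ) (hσ : 0 < σ) : ∫ t : ℝ, gpdf σ m t = 1 := by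
  have h1 : ∀ t : ℝ, gpdf σ m t = (1 / (σ * Real.sqrt (2 * Real.pi))) *
      Real.exp (-(1/(2*σ^2)) * (t - m)^2) := by
    intro t; unfold gpdf; ring_nf
  simp only [h1]
  rw [integral_const_mul]
  rw [show (fun t : ℝ => Real.exp (-(1/(2*σ^2)) * (t - m)^2)) = (fun t : ℝ => (fun x => Real.exp (-(1/(2*σ^2)) * x^2)) (t - m)) from rfl]
  rw [MeasureTheory.integral_sub_right_eq_self (fun x => Real.exp (-(1/(2*σ^2)) * x^2)) m]
  rw [integral_gaussian]
  have : Real.pi / (1/(2*σ^2)) = σ^2 * (2 * Real.pi) := by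
    field_simp
  rw [this, Real.sqrt_mul (sq_nonneg σ), Real.sqrt_sq hσ.le]
  field_simp

lemma gpdf_pow (σ μ ν α : ℝ) (hσ : 0 < σ) (t : ℝ) :
    gpdf σ μ t ^ α * gpdf σ ν t ^ (1 - α)
      = Real.exp (α * (α - 1) * (μ - ν) ^ 2 / (2 * σ ^ 2)) *
        gpdf σ (α * μ + (1 - α) * ν) t := by
  have hA : (0:ℝ) < 1 / (σ * Real.sqrt (2 * Real.pi)) := by
    positivity
  unfold gpdf
  rw [Real.mul_rpow hA.le (Real.exp_nonneg _), Real.mul_rpow hA.le (Real.exp_nonneg _),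
    ← Real.exp_mul, ← Real.exp_mul]
  rw [show (1 / (σ * Real.sqrt (2 * Real.pi))) ^ α * Real.exp (-(t - μ) ^ 2 / (2 * σ ^ 2) * α) *
      ((1 / (σ * Real.sqrt (2 * Real.pi))) ^ (1-α) * Real.exp (-(t - ν) ^ 2 / (2 * σ ^ 2) * (1-α)))
      = ((1 / (σ * Real.sqrt (2 * Real.pi))) ^ α * (1 / (σ * Real.sqrt (2 * Real.pi))) ^ (1-α)) *
        (Real.exp (-(t - μ) ^ 2 / (2 * σ ^ 2) * α) * Real.exp (-(t - ν) ^ 2 / (2 * σ ^ 2) * (1-α)))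
      from by ring]
  rw [← Real.rpow_add hA, ← Real.exp_add]
  rw [show α + (1 - α) = 1 from by ring, Real.rpow_one]
  rw [show Real.exp (α * (α - 1) * (μ - ν) ^ 2 / (2 * σ ^ 2)) *
      (1 / (σ * Real.sqrt (2 * Real.pi)) * Real.exp (-(t - (α * μ + (1 - α) * ν)) ^ 2 / (2 * σ ^ 2)))
      = 1 / (σ * Real.sqrt (2 * Real.pi)) *
        (Real.exp (α * (α - 1) * (μ - ν) ^ 2 / (2 * σ ^ 2)) *
         Real.exp (-(t - (α * μ + (1 - α) * ν)) ^ 2 / (2 * σ ^ 2))) from by ring,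
    ← Real.exp_add]
  congr 1
  field_simp
  ring

/-- Rényi divergence of order `α > 1` between the equal-variance Gaussians
`N(μ, σ²)` and `N(ν, σ²)` equals `α·(μ-ν)²/(2σ²)`; in particular, the Gaussian
mechanism with ℓ2-sensitivity `Δ` and noise variance `σ²` is `(α, α·Δ²/(2σ²))`-RDP. -/
theorem renyi_div_gaussian (μ ν σ : ℝ) (hσ : 0 < σ) (α : ℝ) (hα : 1 < α) :
    (1 / (α - 1)) * Real.log (∫ t : ℝ, gpdf σ μ t ^ α * gpdf σ ν t ^ (1 - α))
        = α * (μ - ν) ^ 2 / (2 * σ ^ 2)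
    ∧ ∀ Δ : ℝ, |μ - ν| ≤ Δ →
        (1 / (α - 1)) * Real.log (∫ t : ℝ, gpdf σ μ t ^ α * gpdf σ ν t ^ (1 - α))
          ≤ α * Δ ^ 2 / (2 * σ ^ 2) := by
  have hInt : (∫ t : ℝ, gpdf σ μ t ^ α * gpdf σ ν t ^ (1 - α))
      = Real.exp (α * (α - 1) * (μ - ν) ^ 2 / (2 * σ ^ 2)) := by
    simp only [gpdf_pow σ μ ν α hσ]
    rw [integral_const_mul, gpdf_integral σ _ hσ, mul_one]
  have hα1 : α - 1 ≠ 0 := by linarith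
  have hmain : (1 / (α - 1)) * Real.log (∫ t : ℝ, gpdf σ μ t ^ α * gpdf σ ν t ^ (1 - α))
      = α * (μ - ν) ^ 2 / (2 * σ ^ 2) := by
    rw [hInt, Real.log_exp]
    field_simp
  refine ⟨hmain, ?_⟩
  intro Δ hΔ
  rw [hmain]
  have hsq : (μ - ν) ^ 2 ≤ Δ ^ 2 := by
    rw [← sq_abs (μ - ν)]
    exact pow_le_pow_left₀ (abs_nonneg _) hΔ 2
  have hαpos : 0 < α := by linarith
  apply div_le_div_of_nonneg_right ?_ (by positivity)
  · exact mul_le_mul_of_nonneg_left hsq hαpos.le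
end

section
/- (Theorem 1, post-processing / data-processing inequality for the Rényi divergence, finite stochastic-matrix case.) Let P, Q : Fin n → ℝ be probability mass functions (nonnegative, summing to 1) with Q(i) > 0 for all i, and let K : Fin n → Fin m → ℝ be a stochastic matrix (K(i)(j) ≥ 0 for all i, j and ∑_j K(i)(j) = 1 for all i) such that for every j there exists i with K(i)(j) > 0. Define the pushforward pmfs (KP)(j) = ∑_i P(i)·K(i)(j) and (KQ)(j) = ∑_i Q(i)·K(i)(j). Then for every real α > 1, (1/(α−1))·log(∑_j (KP)(j)^α·(KQ)(j)^{1−α}) ≤ (1/(α−1))·log(∑_i P(i)^α·Q(i)^{1−α}). -/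
open Real

lemma jensen_step {n : ℕ} (a b : Fin n → ℝ) (ha : ∀ i, 0 ≤ a i) (hb : ∀ i, 0 ≤ b i)
    (hab : ∀ i, b i = 0 → a i = 0) (hS : 0 < ∑ i, b i) (α : ℝ) (hα : 1 < α) :
    (∑ i, a i) ^ α * (∑ i, b i) ^ (1 - α) ≤ ∑ i, (a i) ^ α * (b i) ^ (1 - α) := by
  set S := ∑ i, b i with hSdef
  set T := ∑ i, a i with hTdef
  have hT0 : 0 ≤ T := Finset.sum_nonneg fun i _ => ha i
  have hSne : S ≠ 0 := ne_of_gt hS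
  set w : Fin n → ℝ := fun i => b i / S with hw
  set z : Fin n → ℝ := fun i => if b i = 0 then 0 else a i / b i with hz
  have hw0 : ∀ i ∈ Finset.univ, (0:ℝ) ≤ w i := fun i _ => div_nonneg (hb i) hS.le
  have hw1 : ∑ i, w i = 1 := by
    simp only [hw, ← Finset.sum_div]
    exact div_self hSne
  have hmem : ∀ i ∈ Finset.univ, z i ∈ Set.Ici (0:ℝ) := by
    intro i _
    simp only [hz]
    split
    · exact Set.mem_Ici.mpr le_rfl
    · exact div_nonneg (ha i) (hb i)
  have hwz : ∀ i, w i • z i = a i / S := by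
    intro i
    by_cases h : b i = 0
    · simp [hw, hz, h, hab i h]
    · simp only [hw, hz, if_neg h, smul_eq_mul]
      rw [div_mul_div_comm, mul_comm (b i) (a i), mul_div_mul_right _ _ h]
  have key := (convexOn_rpow hα.le).map_sum_le hw0 hw1 hmem
  have hsum : ∑ i, w i • z i = T / S := by
    simp only [hwz, hTdef, ← Finset.sum_div]
  rw [hsum] at key
  -- key : (T / S) ^ α ≤ ∑ i, w i • (z i) ^ α
  have hmul := mul_le_mul_of_nonneg_left key hS.le
  have hL : S * (T / S) ^ α = T ^ α * S ^ (1 - α) := by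
    rw [Real.div_rpow hT0 hS.le, Real.rpow_sub hS, Real.rpow_one]
    field_simp
  have hR : S * ∑ i, w i • (z i) ^ α = ∑ i, (a i) ^ α * (b i) ^ (1 - α) := by
    rw [Finset.mul_sum]
    apply Finset.sum_congr rfl
    intro i _
    by_cases h : b i = 0
    · simp [hw, hz, h, hab i h, Real.zero_rpow (by positivity : α ≠ 0)]
    · have hbi : 0 < b i := lt_of_le_of_ne (hb i) (Ne.symm h)
      simp only [hw, hz, if_neg h, smul_eq_mul]
      rw [Real.div_rpow (ha i) (hb i), Real.rpow_sub hbi, Real.rpow_one]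
      field_simp
  rw [hL, hR] at hmul
  exact hmul

/-- Theorem 1 (post-processing / data-processing inequality for the Rényi divergence,
finite stochastic-matrix case): post-processing pmfs `P, Q` on `Fin n` by a stochastic
matrix `K` does not increase the Rényi divergence of order `α > 1`. -/
theorem renyi_div_data_processing (n m : ℕ) (P Q : Fin n → ℝ)
    (hP0 : ∀ i, 0 ≤ P i) (hQ0 : ∀ i, 0 < Q i)
    (hP1 : ∑ i, P i = 1) (hQ1 : ∑ i, Q i = 1)
    (K : Fin n → Fin m → ℝ)
    (hK0 : ∀ i j, 0 ≤ K i j) (hK1 : ∀ i, ∑ j, K i j = 1)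
    (hKpos : ∀ j, ∃ i, 0 < K i j)
    (α : ℝ) (hα : 1 < α) :
    (1 / (α - 1)) * Real.log (∑ j, (∑ i, P i * K i j) ^ α * (∑ i, Q i * K i j) ^ (1 - α))
      ≤ (1 / (α - 1)) * Real.log (∑ i, P i ^ α * Q i ^ (1 - α)) := by
  have hαne : α ≠ 0 := by positivity
  -- per-j inequality
  have hstep : ∀ j, (∑ i, P i * K i j) ^ α * (∑ i, Q i * K i j) ^ (1 - α)
      ≤ ∑ i, P i ^ α * Q i ^ (1 - α) * K i j := by
    intro j
    obtain ⟨i₀, hi₀⟩ := hKpos j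
    have hS : 0 < ∑ i, Q i * K i j :=
      Finset.sum_pos' (fun i _ => mul_nonneg (hQ0 i).le (hK0 i j))
        ⟨i₀, Finset.mem_univ _, mul_pos (hQ0 i₀) hi₀⟩
    have := jensen_step (fun i => P i * K i j) (fun i => Q i * K i j)
      (fun i => mul_nonneg (hP0 i) (hK0 i j)) (fun i => mul_nonneg (hQ0 i).le (hK0 i j))
      (fun i h => by
        have : K i j = 0 := by
          rcases mul_eq_zero.mp h with h' | h'
          · exact absurd h' (ne_of_gt (hQ0 i))
          · exact h'
        simp [this]) hS α hα
    refine this.trans_eq (Finset.sum_congr rfl fun i _ => ?_)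
    by_cases h : K i j = 0
    · simp [h, Real.zero_rpow hαne]
    · have hKp : 0 < K i j := lt_of_le_of_ne (hK0 i j) (Ne.symm h)
      rw [Real.mul_rpow (hP0 i) (hK0 i j), Real.mul_rpow (hQ0 i).le (hK0 i j)]
      have : K i j ^ α * K i j ^ (1 - α) = K i j := by
        rw [← Real.rpow_add hKp]
        simp
      rw [mul_mul_mul_comm, this]
  -- sum the per-j inequality and swap sums
  have hmain : ∑ j, (∑ i, P i * K i j) ^ α * (∑ i, Q i * K i j) ^ (1 - α)
      ≤ ∑ i, P i ^ α * Q i ^ (1 - α) := by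
    calc ∑ j, (∑ i, P i * K i j) ^ α * (∑ i, Q i * K i j) ^ (1 - α)
        ≤ ∑ j, ∑ i, P i ^ α * Q i ^ (1 - α) * K i j :=
          Finset.sum_le_sum fun j _ => hstep j
      _ = ∑ i, P i ^ α * Q i ^ (1 - α) := by
          rw [Finset.sum_comm]
          apply Finset.sum_congr rfl
          intro i _
          rw [← Finset.mul_sum, hK1 i, mul_one]
  -- positivity of LHS sum
  have hLpos : 0 < ∑ j, (∑ i, P i * K i j) ^ α * (∑ i, Q i * K i j) ^ (1 - α) := by
    have h1 : ∑ j, ∑ i, P i * K i j = 1 := by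
      rw [Finset.sum_comm]
      calc ∑ i, ∑ j, P i * K i j = ∑ i, P i := by
            apply Finset.sum_congr rfl
            intro i _
            rw [← Finset.mul_sum, hK1 i, mul_one]
        _ = 1 := hP1
    have : ∃ j, 0 < ∑ i, P i * K i j := by
      by_contra hc
      push_neg at hc
      have : ∑ j, ∑ i, P i * K i j ≤ 0 := Finset.sum_nonpos fun j _ => hc j
      rw [h1] at this; linarith
    obtain ⟨j₀, hj₀⟩ := this
    apply Finset.sum_pos'
    · intro j _
      apply mul_nonneg (Real.rpow_nonneg (Finset.sum_nonneg fun i _ => mul_nonneg (hP0 i) (hK0 i j)) _)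
      exact Real.rpow_nonneg (Finset.sum_nonneg fun i _ => mul_nonneg (hQ0 i).le (hK0 i j)) _
    · refine ⟨j₀, Finset.mem_univ _, ?_⟩
      obtain ⟨i₀, hi₀⟩ := hKpos j₀
      have hS : 0 < ∑ i, Q i * K i j₀ :=
        Finset.sum_pos' (fun i _ => mul_nonneg (hQ0 i).le (hK0 i j₀))
          ⟨i₀, Finset.mem_univ _, mul_pos (hQ0 i₀) hi₀⟩
      exact mul_pos (Real.rpow_pos_of_pos hj₀ _) (Real.rpow_pos_of_pos hS _)
  have hlog := Real.log_le_log hLpos hmain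
  have hc : 0 ≤ 1 / (α - 1) := div_nonneg zero_le_one (by linarith)
  exact mul_le_mul_of_nonneg_left hlog hc
end
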